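/- Let m ≥ 2 and let f(x_l,…,x_r) = Σ_{i=l}^{r} λ_i x_i (mod m) be a linear local rule with associated cellular automaton T_f on (ZMod m)^ℤ. Then T_f is bijective if and only if for every prime factor p of m there exists a unique index j with l ≤ j ≤ r such that p does not divide λ_j (i.e., the reduction of f modulo p is permutative at exactly one index). -/

import Mathlib

/-- The linear cellular automaton on `(ZMod m)^ℤ` with local rule
`f(x_l, …, x_r) = Σ_{j=l}^{r} λ_j x_j (mod m)`:
`(T_f x)_i = Σ_{j=l}^{r} λ_j x_{i+j}`. -/
noncomputable def cellAuto (m : ℕ) (l r : ℤ) (lam : ℤ → ZMod m) :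
    (ℤ → ZMod m) → (ℤ → ZMod m) :=
  fun x i => ∑ j ∈ Finset.Icc l r, lam j * x (i + j)

noncomputable section

namespace CAproof

/-! ### The algebraic representation:  `cellAuto` is the action of a Laurent
"polynomial" (an element of `AddMonoidAlgebra (ZMod m) ℤ`) on sequences. -/

/-- shift action of `Multiplicative ℤ` on sequences -/
def shiftHom (R : Type*) [CommRing R] : Multiplicative ℤ →* Module.End R (ℤ → R) where
  toFun g :=
    { toFun := fun x i => x (i + Multiplicative.toAdd g)
      map_add' := fun _ _ => rfl
      map_smul' := fun _ _ => rfl }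
  map_one' := by ext x i; simp
  map_mul' := fun g h => by
    ext x i
    simp [Module.End.mul_apply, add_assoc]

def laurent (m : ℕ) (l r : ℤ) (lam : ℤ → ZMod m) : AddMonoidAlgebra (ZMod m) ℤ :=
  ∑ j ∈ Finset.Icc l r, AddMonoidAlgebra.single j (lam j)

def toEnd (m : ℕ) : AddMonoidAlgebra (ZMod m) ℤ →ₐ[ZMod m] Module.End (ZMod m) (ℤ → ZMod m) :=
  AddMonoidAlgebra.lift (ZMod m) _ ℤ (shiftHom (ZMod m))

lemma toEnd_laurent_apply (m : ℕ) (l r : ℤ) (lam : ℤ → ZMod m) :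
    ⇑(toEnd m (laurent m l r lam)) = cellAuto m l r lam := by
  funext x i
  simp only [laurent, map_sum, LinearMap.coe_sum, Finset.sum_apply, toEnd,
    AddMonoidAlgebra.lift_single, LinearMap.smul_apply, cellAuto]
  rfl

/-! ### Coefficientwise maps of `AddMonoidAlgebra _ ℤ` -/

variable {R S : Type*} [CommRing R] [CommRing S]

/-- coefficientwise ring hom on `AddMonoidAlgebra _ ℤ` -/
def mapCoeff (f : R →+* S) : AddMonoidAlgebra R ℤ →+* AddMonoidAlgebra S ℤ :=
  AddMonoidAlgebra.liftNCRingHom ((AddMonoidAlgebra.singleZeroRingHom).comp f)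
    (AddMonoidAlgebra.of S ℤ) (fun _ _ => Commute.all _ _)

lemma mapCoeff_single (f : R →+* S) (a : ℤ) (b : R) :
    mapCoeff f (AddMonoidAlgebra.single a b) = AddMonoidAlgebra.single a (f b) := by
  show AddMonoidAlgebra.liftNC _ _ (AddMonoidAlgebra.single a b) = _
  rw [AddMonoidAlgebra.liftNC_single]
  show AddMonoidAlgebra.single 0 (f b) * AddMonoidAlgebra.single a 1 = _
  rw [AddMonoidAlgebra.single_mul_single, zero_add, mul_one]

lemma mapCoeff_apply (f : R →+* S) (E : AddMonoidAlgebra R ℤ) (j : ℤ) :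
    (mapCoeff f E).coeff j = f (E.coeff j) := by
  classical
  induction E using AddMonoidAlgebra.induction with
  | zero => simp
  | single_add a b E _ _ ih =>
    rw [map_add, AddMonoidAlgebra.coeff_add, AddMonoidAlgebra.coeff_add, Finsupp.add_apply,
      Finsupp.add_apply, ih, map_add]
    congr 1
    rw [mapCoeff_single]
    simp only [AddMonoidAlgebra.coeff_single, Finsupp.single_apply]
    split <;> simp

lemma exists_eq_smul_of_cast_eq_zero {m a : ℕ} [NeZero m] (hd : a ∣ m) (x : ZMod m)
    (hx : ZMod.castHom hd (ZMod a) x = 0) : ∃ u, x = (a : ZMod m) * u := by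
  have ha : a ≠ 0 := by
    rintro rfl
    exact (NeZero.ne m) (zero_dvd_iff.mp hd)
  haveI : NeZero a := ⟨ha⟩
  have h1 : ((x.val : ℕ) : ZMod a) = 0 := by
    rwa [ZMod.castHom_apply, ← ZMod.natCast_val] at hx
  have h2 : a ∣ x.val := (ZMod.natCast_eq_zero_iff _ _).mp h1
  obtain ⟨u, hu⟩ := h2
  refine ⟨(u : ZMod m), ?_⟩
  rw [← Nat.cast_mul, ← hu, ZMod.natCast_rightInverse x]

lemma exists_smul_of_mapCoeff_eq_zero {m a : ℕ} [NeZero m] (hd : a ∣ m)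
    (E : AddMonoidAlgebra (ZMod m) ℤ)
    (hE : mapCoeff (ZMod.castHom hd (ZMod a)) E = 0) :
    ∃ E', E = (a : ZMod m) • E' := by
  classical
  have hjall : ∀ j, ZMod.castHom hd (ZMod a) (E.coeff j) = 0 := by
    intro j
    have := congrArg (fun F : AddMonoidAlgebra (ZMod a) ℤ => F.coeff j) hE
    simpa [mapCoeff_apply] using this
  refine ⟨AddMonoidAlgebra.ofCoeff (Finsupp.onFinset E.coeff.support
      (fun j => if h0 : E.coeff j = 0 then 0
        else (exists_eq_smul_of_cast_eq_zero hd (E.coeff j) (hjall j)).choose)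
      (fun j hj => ?_)), ?_⟩
  · rw [Finsupp.mem_support_iff]
    intro h0
    exact hj (dif_pos h0)
  · apply AddMonoidAlgebra.coeff_injective
    ext j
    rw [AddMonoidAlgebra.coeff_smul_apply]
    simp only [AddMonoidAlgebra.coeff_ofCoeff, Finsupp.onFinset_apply, smul_eq_mul]
    by_cases h0 : E.coeff j = 0
    · simp [h0]
    · rw [dif_neg h0]
      exact (exists_eq_smul_of_cast_eq_zero hd (E.coeff j) (hjall j)).choose_spec

/-! ### The unit criterion for the Laurent polynomial -/

def Cond (l r : ℤ) (m : ℕ) (lam : ℤ → ZMod m) : Prop :=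
  ∀ p : ℕ, p.Prime → ∀ h : p ∣ m,
    ∃! j, j ∈ Finset.Icc l r ∧ ZMod.castHom h (ZMod p) (lam j) ≠ 0

lemma isUnit_laurent (l r : ℤ) :
    ∀ m : ℕ, m ≠ 0 → ∀ lam : ℤ → ZMod m, Cond l r m lam →
      IsUnit (laurent m l r lam) := by
  intro m
  induction m using Nat.recOnPosPrimePosCoprime with
  | zero => intro h; exact absurd rfl h
  | one =>
    intro _ lam _
    haveI : Subsingleton (AddMonoidAlgebra (ZMod 1) ℤ) :=
      ⟨fun x y => AddMonoidAlgebra.coeff_injective (Finsupp.ext fun a => Subsingleton.elim _ _)⟩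
    exact isUnit_of_subsingleton _
  | prime_pow p n hp hn =>
    intro hne lam hc
    haveI : Fact p.Prime := ⟨hp⟩
    haveI : NeZero (p ^ n) := ⟨hne⟩
    have hdp : p ∣ p ^ n := dvd_pow_self p hn.ne'
    obtain ⟨j0, ⟨hj0m, hj0ne⟩, hj0u⟩ := hc p hp hdp
    have hval : ¬ p ∣ (lam j0).val := by
      intro hdvd
      apply hj0ne
      rw [ZMod.castHom_apply, ← ZMod.natCast_val]
      exact (ZMod.natCast_eq_zero_iff _ _).mpr hdvd
    have hu : IsUnit (lam j0) := by
      rw [← ZMod.natCast_rightInverse (lam j0), ZMod.isUnit_iff_coprime]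
      exact (Nat.coprime_pow_right_iff hn _ _).mpr ((hp.coprime_iff_not_dvd).mpr hval).symm
    have humon : IsUnit (AddMonoidAlgebra.single j0 (lam j0) :
        AddMonoidAlgebra (ZMod (p^n)) ℤ) := by
      refine IsUnit.of_mul_eq_one (a := _) (AddMonoidAlgebra.single (-j0) ↑hu.unit⁻¹) ?_
      rw [AddMonoidAlgebra.single_mul_single, add_neg_cancel, IsUnit.mul_val_inv]
      rfl
    set E := laurent (p^n) l r lam - AddMonoidAlgebra.single j0 (lam j0) with hEdef
    have hψE : mapCoeff (ZMod.castHom hdp (ZMod p)) E = 0 := by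
      rw [hEdef, map_sub, laurent, map_sum]
      rw [Finset.sum_eq_single j0 ?h₀ ?h₁]
      · rw [mapCoeff_single, sub_self]
      case h₀ =>
        intro j hj hne'
        rw [mapCoeff_single]
        have hz : ZMod.castHom hdp (ZMod p) (lam j) = 0 := by
          by_contra hne''
          exact hne' (hj0u j ⟨hj, hne''⟩)
        rw [hz]
        exact AddMonoidAlgebra.single_zero j
      case h₁ =>
        intro hnotmem; exact absurd hj0m hnotmem
    obtain ⟨E', hE'⟩ := exists_smul_of_mapCoeff_eq_zero hdp E hψE
    have hnil : IsNilpotent E := by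
      refine ⟨n, ?_⟩
      rw [hE', smul_pow]
      rw [show ((p : ZMod (p^n)))^n = 0 by rw [← Nat.cast_pow, ZMod.natCast_self], zero_smul]
    have hsplit : laurent (p^n) l r lam = AddMonoidAlgebra.single j0 (lam j0) + E := by
      rw [hEdef]; ring
    rw [hsplit]
    exact IsNilpotent.isUnit_add_left_of_commute hnil humon (Commute.all _ _)
  | coprime a b ha hb hab iha ihb =>
    intro hne lam hc
    haveI : NeZero (a*b) := ⟨hne⟩
    haveI : NeZero a := ⟨by positivity⟩
    haveI : NeZero b := ⟨by positivity⟩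
    have hda : a ∣ a * b := ⟨b, rfl⟩
    have hdb : b ∣ a * b := ⟨a, mul_comm a b⟩
    have transfer : ∀ (c : ℕ) (hdc : c ∣ a * b), c ≠ 0 →
        Cond l r c (fun j => ZMod.castHom hdc (ZMod c) (lam j)) := by
      intro c hdc hcne p hp hpc
      obtain ⟨j0, ⟨hm, hne'⟩, hu⟩ := hc p hp (hpc.trans hdc)
      have key : ∀ j, ZMod.castHom hpc (ZMod p) (ZMod.castHom hdc (ZMod c) (lam j))
          = ZMod.castHom (hpc.trans hdc) (ZMod p) (lam j) := fun j =>
        RingHom.congr_fun (ZMod.castHom_comp hpc hdc) (lam j)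
      exact ⟨j0, ⟨hm, by rw [key]; exact hne'⟩,
        fun y hy => hu y ⟨hy.1, by rw [← key]; exact hy.2⟩⟩
    obtain ⟨Ya, hYa⟩ := (iha (by omega) _ (transfer a hda (by omega))).exists_right_inv
    obtain ⟨Yb, hYb⟩ := (ihb (by omega) _ (transfer b hdb (by omega))).exists_right_inv
    set P := laurent (a*b) l r lam with hP
    have hψP : ∀ (c : ℕ) (hdc : c ∣ a * b), mapCoeff (ZMod.castHom hdc (ZMod c)) P
        = laurent c l r (fun j => ZMod.castHom hdc (ZMod c) (lam j)) := by
      intro c hdc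
      rw [hP, laurent, laurent, map_sum]
      exact Finset.sum_congr rfl fun j _ => mapCoeff_single _ _ _
    set Za : AddMonoidAlgebra (ZMod (a*b)) ℤ := AddMonoidAlgebra.ofCoeff (Finsupp.mapRange
      (fun c : ZMod a => ((c.val : ℕ) : ZMod (a*b))) (by simp) Ya.coeff) with hZa
    set Zb : AddMonoidAlgebra (ZMod (a*b)) ℤ := AddMonoidAlgebra.ofCoeff (Finsupp.mapRange
      (fun c : ZMod b => ((c.val : ℕ) : ZMod (a*b))) (by simp) Yb.coeff) with hZb
    have hmapZa : mapCoeff (ZMod.castHom hda (ZMod a)) Za = Ya := by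
      apply AddMonoidAlgebra.coeff_injective
      ext j
      rw [mapCoeff_apply, hZa, AddMonoidAlgebra.coeff_ofCoeff, Finsupp.mapRange_apply, map_natCast,
        ZMod.natCast_rightInverse]
    have hmapZb : mapCoeff (ZMod.castHom hdb (ZMod b)) Zb = Yb := by
      apply AddMonoidAlgebra.coeff_injective
      ext j
      rw [mapCoeff_apply, hZb, AddMonoidAlgebra.coeff_ofCoeff, Finsupp.mapRange_apply, map_natCast,
        ZMod.natCast_rightInverse]
    have hEa : mapCoeff (ZMod.castHom hda (ZMod a)) (P * Za - 1) = 0 := by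
      rw [map_sub, map_mul, map_one, hψP a hda, hmapZa, hYa, sub_self]
    have hEb : mapCoeff (ZMod.castHom hdb (ZMod b)) (P * Zb - 1) = 0 := by
      rw [map_sub, map_mul, map_one, hψP b hdb, hmapZb, hYb, sub_self]
    obtain ⟨Ea, hEa'⟩ := exists_smul_of_mapCoeff_eq_zero hda _ hEa
    obtain ⟨Eb, hEb'⟩ := exists_smul_of_mapCoeff_eq_zero hdb _ hEb
    have hzero : (P * Za - 1) * (P * Zb - 1) = 0 := by
      rw [hEa', hEb', smul_mul_assoc, mul_smul_comm, smul_smul,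
        ← Nat.cast_mul, ZMod.natCast_self, zero_smul]
    exact IsUnit.of_mul_eq_one (a := P) (Za + Zb - P * Za * Zb) (by linear_combination -hzero)

/-! ### The embedding `ZMod p → ZMod m` -/

section iota
variable {m p : ℕ}

lemma cast_mod_eq [NeZero m] (hd : p ∣ m) {n1 n2 : ℕ} (h : n1 ≡ n2 [MOD p]) :
    ((m / p * n1 : ℕ) : ZMod m) = ((m / p * n2 : ℕ) : ZMod m) := by
  rw [ZMod.natCast_eq_natCast_iff]
  have := Nat.ModEq.mul_left' (c := m / p) h
  rwa [Nat.div_mul_cancel hd] at this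

/-- embedding of `ZMod p` into `ZMod m` as multiples of `m/p` -/
def iota (m p : ℕ) : ZMod p → ZMod m := fun z => ((m / p * z.val : ℕ) : ZMod m)

lemma iota_add [NeZero m] (hp : p.Prime) (hd : p ∣ m) (z w : ZMod p) :
    iota m p (z + w) = iota m p z + iota m p w := by
  haveI : NeZero p := ⟨hp.ne_zero⟩
  rw [iota, iota, iota, ← Nat.cast_add, ← Nat.mul_add]
  refine cast_mod_eq hd ?_
  rw [← ZMod.natCast_eq_natCast_iff (c := p)]
  push_cast
  rw [ZMod.natCast_val, ZMod.natCast_val, ZMod.natCast_val]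
  simp [ZMod.cast_id]

lemma iota_zero [NeZero m] (hp : p.Prime) : iota m p 0 = 0 := by
  haveI : NeZero p := ⟨hp.ne_zero⟩
  simp [iota]

lemma iota_smul [NeZero m] (hp : p.Prime) (hd : p ∣ m) (lam : ZMod m) (z : ZMod p) :
    lam * iota m p z = iota m p (ZMod.castHom hd (ZMod p) lam * z) := by
  haveI : NeZero p := ⟨hp.ne_zero⟩
  conv_lhs => rw [← ZMod.natCast_rightInverse lam]
  rw [iota, iota, ← Nat.cast_mul, Nat.mul_left_comm]
  refine cast_mod_eq hd ?_
  rw [← ZMod.natCast_eq_natCast_iff (c := p)]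
  push_cast
  rw [ZMod.natCast_val, ZMod.natCast_val, ZMod.natCast_val, ZMod.castHom_apply]
  simp [ZMod.cast_id]

lemma iota_one_ne_zero [NeZero m] (hp : p.Prime) (hd : p ∣ m) (hm : 2 ≤ m) :
    iota m p 1 ≠ 0 := by
  haveI : NeZero p := ⟨hp.ne_zero⟩
  have hple : p ≤ m := Nat.le_of_dvd (by omega) hd
  have hq1 : 0 < m / p := Nat.div_pos hple hp.pos
  have hq2 : m / p < m := Nat.div_lt_self (by omega) hp.one_lt
  intro h
  rw [iota] at h
  have hv1 : (1 : ZMod p).val = 1 := by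
    rw [ZMod.val_one_eq_one_mod]; exact Nat.mod_eq_of_lt hp.one_lt
  rw [hv1, Nat.mul_one] at h
  have h2 := (ZMod.natCast_eq_zero_iff _ _).mp h
  have := Nat.le_of_dvd hq1 h2
  omega

end iota

/-! ### A nonzero solution of the linear recurrence over `ZMod p` -/

lemma exists_kernel_seq (p : ℕ) (hp : p.Prime) (l r : ℤ) (c : ℤ → ZMod p)
    (j1 j2 : ℤ) (h1m : j1 ∈ Finset.Icc l r) (h2m : j2 ∈ Finset.Icc l r)
    (hne : j1 ≠ j2) (hc1 : c j1 ≠ 0) (hc2 : c j2 ≠ 0) :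
    ∃ y : ℤ → ZMod p, y 0 = 1 ∧ ∀ i : ℤ, ∑ j ∈ Finset.Icc l r, c j * y (i + j) = 0 := by
  classical
  haveI : Fact p.Prime := ⟨hp⟩
  set S : Finset ℤ := (Finset.Icc l r).filter (fun j => c j ≠ 0) with hS
  have hS1 : j1 ∈ S := Finset.mem_filter.mpr ⟨h1m, hc1⟩
  have hS2 : j2 ∈ S := Finset.mem_filter.mpr ⟨h2m, hc2⟩
  have hSne : S.Nonempty := ⟨j1, hS1⟩
  set a : ℤ := S.min' hSne with ha
  have haS : a ∈ S := S.min'_mem hSne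
  have haIcc : a ∈ Finset.Icc l r := (Finset.mem_filter.mp haS).1
  have hca : c a ≠ 0 := (Finset.mem_filter.mp haS).2
  have hmin : ∀ j ∈ S, a ≤ j := fun j hj => S.min'_le j hj
  set b : ℤ := if j1 = a then j2 else j1 with hb
  have hbS : b ∈ S := by rw [hb]; split <;> assumption
  have hba : a < b := by
    rcases lt_or_eq_of_le (hmin b hbS) with h | h
    · exact h
    · exfalso
      rw [hb] at h
      by_cases h' : j1 = a
      · rw [if_pos h'] at h; exact hne (h'.trans h)
      · rw [if_neg h'] at h; exact h' h.symm
  have hbIcc : b ∈ Finset.Icc l r := (Finset.mem_filter.mp hbS).1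
  have hla : l ≤ a := (Finset.mem_Icc.mp haIcc).1
  have har : a ≤ r := (Finset.mem_Icc.mp haIcc).2
  have hcb : c b ≠ 0 := (Finset.mem_filter.mp hbS).2
  have hbr : b ≤ r := (Finset.mem_Icc.mp hbIcc).2
  set P : Polynomial (ZMod p) := ∑ j ∈ Finset.Icc a r, Polynomial.C (c j) *
    Polynomial.X ^ (j - a).toNat with hP
  have hcoeff : ∀ k : ℕ, P.coeff k = if a + (k : ℤ) ≤ r then c (a + k) else 0 := by
    intro k
    rw [hP, Polynomial.finset_sum_coeff]
    split
    · next h =>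
      rw [Finset.sum_eq_single (a + (k : ℤ))
        (fun j hj hjne => by
          have hjm := Finset.mem_Icc.mp hj
          rw [Polynomial.coeff_C_mul, Polynomial.coeff_X_pow, if_neg (by omega), mul_zero])
        (fun habs => absurd (Finset.mem_Icc.mpr ⟨by omega, h⟩) habs)]
      rw [Polynomial.coeff_C_mul, Polynomial.coeff_X_pow,
        if_pos (show k = (a + (k:ℤ) - a).toNat by omega), mul_one]
    · next h =>
      refine Finset.sum_eq_zero fun j hj => ?_
      have hjm := Finset.mem_Icc.mp hj
      rw [Polynomial.coeff_C_mul, Polynomial.coeff_X_pow, if_neg (by omega), mul_zero]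
  have hc0 : P.coeff 0 ≠ 0 := by
    rw [hcoeff 0]
    rw [if_pos (by omega : a + ((0:ℕ):ℤ) ≤ r)]
    simpa using hca
  have hcbk : P.coeff (b - a).toNat ≠ 0 := by
    rw [hcoeff, if_pos (by omega)]
    rw [show a + (((b - a).toNat : ℕ) : ℤ) = b by omega]
    exact hcb
  have hPne : P ≠ 0 := fun h => hc0 (by rw [h]; simp)
  have hPnu : ¬ IsUnit P := by
    intro hu
    have hdeg := Polynomial.natDegree_eq_zero_of_isUnit hu
    have hC := Polynomial.eq_C_of_natDegree_eq_zero hdeg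
    apply hcbk
    rw [hC, Polynomial.coeff_C, if_neg (by omega)]
  obtain ⟨Q, hQirr, hQdvd⟩ := WfDvdMonoid.exists_irreducible_factor hPnu hPne
  haveI := Fact.mk hQirr
  have hαne : (AdjoinRoot.root Q) ≠ 0 := by
    intro h0
    rw [← AdjoinRoot.mk_X, AdjoinRoot.mk_eq_zero] at h0
    have hXQ : Polynomial.X ∣ Q :=
      ((hQirr.associated_of_dvd Polynomial.irreducible_X h0).symm).dvd
    exact hc0 (Polynomial.X_dvd_iff.mp (hXQ.trans hQdvd))
  set u : (AdjoinRoot Q)ˣ := (isUnit_iff_ne_zero.mpr hαne).unit with hu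
  have huval : (u : AdjoinRoot Q) = AdjoinRoot.root Q :=
    (isUnit_iff_ne_zero.mpr hαne).unit_spec
  have hQ0 : Q ≠ 0 := hQirr.ne_zero
  set B := AdjoinRoot.powerBasis hQ0 with hB
  have hdim : 0 < B.dim := by
    rw [hB, AdjoinRoot.powerBasis_dim]
    exact hQirr.natDegree_pos
  set φ : AdjoinRoot Q →ₗ[ZMod p] ZMod p := B.basis.coord ⟨0, hdim⟩ with hφ
  refine ⟨fun i => φ ((u ^ i : (AdjoinRoot Q)ˣ) : AdjoinRoot Q), ?_, ?_⟩
  · show φ ((u ^ (0:ℤ) : (AdjoinRoot Q)ˣ) : AdjoinRoot Q) = 1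
    rw [zpow_zero]
    have hone : ((1 : (AdjoinRoot Q)ˣ) : AdjoinRoot Q) = B.basis ⟨0, hdim⟩ := by
      rw [PowerBasis.coe_basis]
      simp
    rw [hone, hφ, Module.Basis.coord_apply, Module.Basis.repr_self]
    simp
  · intro i
    show ∑ j ∈ Finset.Icc l r, c j * φ ((u ^ (i + j) : (AdjoinRoot Q)ˣ) : AdjoinRoot Q) = 0
    have hsub : Finset.Icc a r ⊆ Finset.Icc l r :=
      Finset.Icc_subset_Icc hla le_rfl
    rw [← Finset.sum_subset hsub (fun j hj hnj => ?_)]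
    swap
    · have hjm := Finset.mem_Icc.mp hj
      have hja : j < a := by
        by_contra hge
        exact hnj (Finset.mem_Icc.mpr ⟨by omega, hjm.2⟩)
      have hcj : c j = 0 := by
        by_contra hne'
        exact absurd (hmin j (Finset.mem_filter.mpr ⟨hj, hne'⟩)) (by omega)
      rw [hcj, zero_mul]
    have hterm : ∀ j ∈ Finset.Icc a r,
        c j * φ ((u ^ (i + j) : (AdjoinRoot Q)ˣ) : AdjoinRoot Q)
          = φ (c j • ((u ^ (i + j) : (AdjoinRoot Q)ˣ) : AdjoinRoot Q)) := by
      intro j _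
      rw [map_smul, smul_eq_mul]
    rw [Finset.sum_congr rfl hterm, ← map_sum]
    have hkey : ∑ j ∈ Finset.Icc a r, c j • ((u ^ (i + j) : (AdjoinRoot Q)ˣ) : AdjoinRoot Q)
        = ((u ^ (i + a) : (AdjoinRoot Q)ˣ) : AdjoinRoot Q) *
          Polynomial.aeval (AdjoinRoot.root Q) P := by
      rw [hP, map_sum, Finset.mul_sum]
      refine Finset.sum_congr rfl fun j hj => ?_
      have hjm := Finset.mem_Icc.mp hj
      rw [map_mul, Polynomial.aeval_C, map_pow, Polynomial.aeval_X]
      rw [mul_comm, ← Algebra.smul_def, smul_mul_assoc]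
      congr 1
      rw [← huval, ← Units.val_pow_eq_pow_val, ← zpow_natCast, ← Units.val_mul, ← zpow_add]
      norm_cast
      congr 1
      omega
    rw [hkey]
    have haev : Polynomial.aeval (AdjoinRoot.root Q) P = 0 := by
      rw [AdjoinRoot.aeval_eq, AdjoinRoot.mk_eq_zero]
      exact hQdvd
    rw [haev, mul_zero, map_zero]

lemma castHom_ne_zero_iff {m p : ℕ} [NeZero m] (hp : p.Prime) (hd : p ∣ m) (x : ZMod m) :
    ZMod.castHom hd (ZMod p) x ≠ 0 ↔ ¬ p ∣ x.val := by
  haveI : NeZero p := ⟨hp.ne_zero⟩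
  rw [ZMod.castHom_apply, ← ZMod.natCast_val]
  exact not_congr (ZMod.natCast_eq_zero_iff _ _)

end CAproof

/-- A linear cellular automaton is bijective iff for every prime factor `p` of `m`
there is a unique index `j` with `l ≤ j ≤ r` such that `p` does not divide `λ_j`. -/
theorem invertible_iff_unique_permutative_index
    (m : ℕ) (hm : 2 ≤ m) (l r : ℤ) (hlr : l ≤ r) (lam : ℤ → ZMod m)
    (hnz : ∃ j ∈ Finset.Icc l r, lam j ≠ 0) :
    Function.Bijective (cellAuto m l r lam) ↔
      ∀ p : ℕ, p.Prime → p ∣ m →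
        ∃! j : ℤ, l ≤ j ∧ j ≤ r ∧ ¬ (p : ℕ) ∣ (lam j).val := by
  classical
  haveI : NeZero m := ⟨by omega⟩
  constructor
  · intro hbij p hp hd
    haveI := Fact.mk hp
    have hex : ∃ j ∈ Finset.Icc l r, ZMod.castHom hd (ZMod p) (lam j) ≠ 0 := by
      by_contra hno
      push_neg at hno
      obtain ⟨x, hx⟩ := hbij.2 (fun _ => 1)
      have h0 : cellAuto m l r lam x 0 = 1 := congrFun hx 0
      have h1 : (ZMod.castHom hd (ZMod p)) (∑ j ∈ Finset.Icc l r, lam j * x (0 + j)) = 1 := by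
        rw [show (∑ j ∈ Finset.Icc l r, lam j * x (0 + j)) = cellAuto m l r lam x 0 from rfl,
          h0, map_one]
      rw [map_sum, Finset.sum_eq_zero (fun j hj => by
        rw [map_mul, hno j hj, zero_mul])] at h1
      exact one_ne_zero h1.symm
    obtain ⟨j0, hj0m, hj0ne⟩ := hex
    refine ⟨j0, ⟨(Finset.mem_Icc.mp hj0m).1, (Finset.mem_Icc.mp hj0m).2,
      (CAproof.castHom_ne_zero_iff hp hd _).mp hj0ne⟩, ?_⟩
    intro y hy
    by_contra hyne
    have hym : y ∈ Finset.Icc l r := Finset.mem_Icc.mpr ⟨hy.1, hy.2.1⟩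
    have hcy : ZMod.castHom hd (ZMod p) (lam y) ≠ 0 :=
      (CAproof.castHom_ne_zero_iff hp hd _).mpr hy.2.2
    obtain ⟨ys, hy0, hyrec⟩ := CAproof.exists_kernel_seq p hp l r
      (fun j => ZMod.castHom hd (ZMod p) (lam j)) y j0 hym hj0m hyne hcy hj0ne
    set x : ℤ → ZMod m := fun i => CAproof.iota m p (ys i) with hxdef
    set ih : ZMod p →+ ZMod m := AddMonoidHom.mk' (CAproof.iota m p)
      (CAproof.iota_add hp hd) with hih
    have hker : cellAuto m l r lam x = 0 := by
      funext i
      show ∑ j ∈ Finset.Icc l r, lam j * CAproof.iota m p (ys (i + j)) = 0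
      rw [Finset.sum_congr rfl (fun j _ => CAproof.iota_smul hp hd (lam j) (ys (i + j)))]
      have : ∀ z : ZMod p, CAproof.iota m p z = ih z := fun z => rfl
      rw [Finset.sum_congr rfl (fun j _ => this _), ← map_sum, hyrec i, map_zero]
    have hx0 : x = 0 := hbij.1 (by rw [hker]; funext i; simp [cellAuto])
    have : CAproof.iota m p (ys 0) = 0 := congrFun hx0 0
    rw [hy0] at this
    exact CAproof.iota_one_ne_zero hp hd hm this
  · intro hcond
    have hc : CAproof.Cond l r m lam := by
      intro p hpp hpd
      obtain ⟨j0, ⟨hl0, hr0, hnd⟩, huq⟩ := hcond p hpp hpd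
      refine ⟨j0, ⟨Finset.mem_Icc.mpr ⟨hl0, hr0⟩,
        (CAproof.castHom_ne_zero_iff hpp hpd _).mpr hnd⟩, fun y hy =>
        huq y ⟨(Finset.mem_Icc.mp hy.1).1, (Finset.mem_Icc.mp hy.1).2,
          (CAproof.castHom_ne_zero_iff hpp hpd _).mp hy.2⟩⟩
    have hunit := (CAproof.isUnit_laurent l r m (by omega) lam hc).map (CAproof.toEnd m)
    rw [← CAproof.toEnd_laurent_apply m l r lam]
    exact (Module.End.isUnit_iff _).mp hunit
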